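/- Let $Y, Z \subseteq \mathbb{P}(V)$ be projective varieties over $\mathbb{C}$, let $y \in Y$ and $z \in Z$ be smooth points with $y \ne z$, and let $x$ be a point on the line joining $y$ and $z$. Then the affine tangent space of the join $S(Y,Z)$ at $x$ (when $x$ is a smooth point of $S(Y,Z)$) contains $\hat{T}_y Y + \hat{T}_z Z$, the sum of the affine (cone) tangent spaces of $Y$ at $y$ and $Z$ at $z$. -/

import Mathlib

/-- **Terracini's Lemma (containment direction), at the level of affine cones.**
Let `Y, Z ⊆ V` be the affine cones over projective varieties, let `y ∈ Y`, `z ∈ Z` be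
(lifts of) points with `y ≠ z`, and let `x = s•y + t•z` (with `s, t ≠ 0`) be a point of the
cone over the line joining them, inside the cone `S = {a + b : a ∈ Y, b ∈ Z}` over the join
`S(Y,Z)`.  Then the (Zariski/affine) tangent space of the join at `x` — here the span of the
tangent cone, which at a smooth point is the affine tangent space — contains
`T̂_y Y + T̂_z Z`. -/
theorem terracini_containment {V : Type*} [NormedAddCommGroup V] [NormedSpace ℂ V]
    (Y Z : Set V)
    (hYcone : ∀ c : ℂ, ∀ y ∈ Y, c • y ∈ Y)
    (hZcone : ∀ c : ℂ, ∀ z ∈ Z, c • z ∈ Z)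
    (y z : V) (hy : y ∈ Y) (hz : z ∈ Z) (hyz : y ≠ z)
    (s t : ℂ) (hs : s ≠ 0) (ht : t ≠ 0) :
    Submodule.span ℂ (tangentConeAt ℂ Y y) ⊔ Submodule.span ℂ (tangentConeAt ℂ Z z) ≤
      Submodule.span ℂ
        (tangentConeAt ℂ {x : V | ∃ a ∈ Y, ∃ b ∈ Z, x = a + b} (s • y + t • z)) := by

  have key : ∀ (W : Set V) (hWcone : ∀ c : ℂ, ∀ w ∈ W, c • w ∈ W) (w u : V) (r : ℂ)
      (hr : r ≠ 0) (hbase : ∀ᶠ (_ : ℕ) in Filter.atTop, True),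
      tangentConeAt ℂ W w ⊆ tangentConeAt ℂ {x : V | ∃ p ∈ W, x = p + u} (r • w + u) := by
    intro W hWcone w u r hr _ v hv
    obtain ⟨c, d, hc, hd, hcd⟩ := mem_tangentConeAt_iff_exists_seq_norm_tendsto_atTop.mp hv
    refine mem_tangentConeAt_iff_exists_seq_norm_tendsto_atTop.mpr ⟨fun n => r⁻¹ * c n, fun n => r • d n, ?_, ?_, ?_⟩
    pick_goal 2
    · filter_upwards [hd] with n hn
      exact ⟨r • (w + d n), hWcone r _ hn, by simp [smul_add]; abel⟩
    · have : (fun n => ‖r⁻¹ * c n‖) = fun n => ‖r⁻¹‖ * ‖c n‖ := by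
        ext n; simp [norm_mul]
      rw [this]
      exact Filter.Tendsto.const_mul_atTop (by simpa using hr) hc
    · have : (fun n => (r⁻¹ * c n) • (r • d n)) = fun n => c n • d n := by
        ext n; rw [smul_smul]; congr 1; field_simp
      rw [this]; exact hcd
  apply sup_le <;> apply Submodule.span_mono
  · intro v hv
    have := key Y hYcone y (t • z) s hs (by simp) hv
    obtain ⟨c, d, hc, hd, hcd⟩ := mem_tangentConeAt_iff_exists_seq_norm_tendsto_atTop.mp this
    refine mem_tangentConeAt_iff_exists_seq_norm_tendsto_atTop.mpr ⟨c, d, hc, ?_, hcd⟩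
    filter_upwards [hd] with n hn
    obtain ⟨p, hp, hpe⟩ := hn
    exact ⟨p, hp, t • z, hZcone t z hz, hpe⟩
  · intro v hv
    have := key Z hZcone z (s • y) t ht (by simp) hv
    obtain ⟨c, d, hc, hd, hcd⟩ := mem_tangentConeAt_iff_exists_seq_norm_tendsto_atTop.mp this
    have hx : s • y + t • z = t • z + s • y := by abel
    rw [hx]
    refine mem_tangentConeAt_iff_exists_seq_norm_tendsto_atTop.mpr ⟨c, d, hc, ?_, hcd⟩
    filter_upwards [hd] with n hn
    obtain ⟨p, hp, hpe⟩ := hn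
    exact ⟨s • y, hYcone s y hy, p, hp, by rw [hpe]; abel⟩
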